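/- Let C be a symmetric monoidal category with unit object 𝟙. Then: (1) the identity morphism id : 𝟙 → 𝟙 is a coidempotent object, and every coidempotent object (C₀, c) admits a morphism to it over 𝟙 (namely c itself); (2) if (C₁, c₁) and (C₂, c₂) are coidempotent objects, then C₁ ⊗ C₂ equipped with the composite C₁ ⊗ C₂ → 𝟙 ⊗ 𝟙 ≅ 𝟙 of c₁ ⊗ c₂ with the unitor is a coidempotent object; (3) C₁ ⊗ C₂ admits morphisms of coidempotent objects to both (C₁, c₁) and (C₂, c₂); and (4) any coidempotent object (D, d) admitting morphisms of coidempotent objects to both (C₁, c₁) and (C₂, c₂) admits a morphism of coidempotent objects to (C₁ ⊗ C₂, c₁ ⊗ c₂). Hence the preorder of coidempotent objects has finite meets, with greatest element 𝟙 and binary meet given by the tensor product. -/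

import Mathlib

open CategoryTheory CategoryTheory.Limits MonoidalCategory

universe v u

variable {C : Type u} [Category.{v} C] [MonoidalCategory C]

/-- `c : C₀ ⟶ 𝟙` is a coidempotent object if `C₀ ◁ c : C₀ ⊗ C₀ ⟶ C₀ ⊗ 𝟙` is invertible. -/
def Coidempotent {C₀ : C} (c : C₀ ⟶ 𝟙_ C) : Prop := IsIso (C₀ ◁ c)

lemma coid_conj {X Y C₀ : C} (e : X ≅ Y) (c : C₀ ⟶ 𝟙_ C) (h : IsIso (Y ◁ c)) :
    IsIso (X ◁ c) := by
  have hx : X ◁ c = (e.hom ▷ C₀) ≫ (Y ◁ c) ≫ (e.inv ▷ 𝟙_ C) := by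
    rw [whisker_exchange, ← comp_whiskerRight_assoc]
    simp
  rw [hx]; infer_instance

lemma coid_tensor_left {C₀ : C} (c : C₀ ⟶ 𝟙_ C) (h : IsIso (C₀ ◁ c)) (Z : C) :
    IsIso ((Z ⊗ C₀) ◁ c) := by
  have hx : (Z ⊗ C₀) ◁ c = (α_ Z C₀ C₀).hom ≫ (Z ◁ (C₀ ◁ c)) ≫ (α_ Z C₀ (𝟙_ C)).inv := by
    rw [← Category.assoc, Iso.eq_comp_inv]
    exact associator_naturality_right Z C₀ c
  rw [hx]; infer_instance

lemma coid_tensor_right [SymmetricCategory C] {C₀ : C} (c : C₀ ⟶ 𝟙_ C) (h : IsIso (C₀ ◁ c))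
    (Z : C) : IsIso ((C₀ ⊗ Z) ◁ c) :=
  coid_conj (β_ C₀ Z) c (coid_tensor_left c h Z)

/-- In a symmetric monoidal category:
(1) `id : 𝟙 ⟶ 𝟙` is a coidempotent object and every coidempotent object `(C₀, c)` admits a
morphism over `𝟙` to it, namely `c` itself;
(2) for coidempotent objects `(C₁, c₁)`, `(C₂, c₂)`, the tensor product `C₁ ⊗ C₂` with
`(c₁ ⊗ₘ c₂) ≫ λ : C₁ ⊗ C₂ ⟶ 𝟙 ⊗ 𝟙 ≅ 𝟙` is a coidempotent object;
(3) `C₁ ⊗ C₂` admits morphisms of coidempotent objects to both `(C₁, c₁)` and `(C₂, c₂)`;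
(4) any coidempotent object `(D, d)` admitting morphisms of coidempotent objects to both
`(C₁, c₁)` and `(C₂, c₂)` admits one to `(C₁ ⊗ C₂, (c₁ ⊗ₘ c₂) ≫ λ)`.
Hence the preorder of coidempotent objects has finite meets, with top `𝟙` and binary meets
given by tensoring. -/
theorem coidempotent_finite_meets [SymmetricCategory C] :
    (Coidempotent (𝟙 (𝟙_ C)) ∧
      ∀ {C₀ : C} (c : C₀ ⟶ 𝟙_ C), Coidempotent c → c ≫ 𝟙 (𝟙_ C) = c) ∧
    ∀ {C₁ C₂ : C} (c₁ : C₁ ⟶ 𝟙_ C) (c₂ : C₂ ⟶ 𝟙_ C),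
      Coidempotent c₁ → Coidempotent c₂ →
        Coidempotent ((c₁ ⊗ₘ c₂) ≫ (λ_ (𝟙_ C)).hom) ∧
        (∃ f : C₁ ⊗ C₂ ⟶ C₁, f ≫ c₁ = (c₁ ⊗ₘ c₂) ≫ (λ_ (𝟙_ C)).hom) ∧
        (∃ f : C₁ ⊗ C₂ ⟶ C₂, f ≫ c₂ = (c₁ ⊗ₘ c₂) ≫ (λ_ (𝟙_ C)).hom) ∧
        ∀ {D : C} (d : D ⟶ 𝟙_ C), Coidempotent d →
          (∃ f : D ⟶ C₁, f ≫ c₁ = d) → (∃ f : D ⟶ C₂, f ≫ c₂ = d) →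
          ∃ f : D ⟶ C₁ ⊗ C₂, f ≫ ((c₁ ⊗ₘ c₂) ≫ (λ_ (𝟙_ C)).hom) = d := by
  refine ⟨⟨?_, fun c _ => Category.comp_id c⟩, fun {C₁ C₂} c₁ c₂ h₁ h₂ => ⟨?_, ?_, ?_, ?_⟩⟩
  · rw [Coidempotent, MonoidalCategory.whiskerLeft_id]; infer_instance
  · -- coidempotence of tensor
    rw [Coidempotent]
    have hA : IsIso ((C₁ ⊗ C₂) ◁ c₁) := coid_tensor_right c₁ h₁ C₂
    have hB : IsIso ((C₁ ⊗ C₂) ◁ c₂) := coid_tensor_left c₂ h₂ C₁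
    have h1 : IsIso ((C₁ ⊗ C₂) ◁ (c₁ ▷ C₂)) := by
      have hx : (C₁ ⊗ C₂) ◁ (c₁ ▷ C₂) =
          (α_ (C₁ ⊗ C₂) C₁ C₂).inv ≫ (((C₁ ⊗ C₂) ◁ c₁) ▷ C₂) ≫ (α_ (C₁ ⊗ C₂) (𝟙_ C) C₂).hom := by
        rw [associator_naturality_middle]; simp
      rw [hx]; infer_instance
    have h2 : IsIso ((C₁ ⊗ C₂) ◁ (𝟙_ C ◁ c₂)) := by
      have hy : IsIso (((C₁ ⊗ C₂) ⊗ 𝟙_ C) ◁ c₂) := coid_conj (ρ_ (C₁ ⊗ C₂)) c₂ hB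
      have hx : (C₁ ⊗ C₂) ◁ (𝟙_ C ◁ c₂) =
          (α_ (C₁ ⊗ C₂) (𝟙_ C) C₂).inv ≫ (((C₁ ⊗ C₂) ⊗ 𝟙_ C) ◁ c₂) ≫
            (α_ (C₁ ⊗ C₂) (𝟙_ C) (𝟙_ C)).hom := by
        rw [associator_naturality_right]; simp
      rw [hx]; infer_instance
    have hx : (C₁ ⊗ C₂) ◁ ((c₁ ⊗ₘ c₂) ≫ (λ_ (𝟙_ C)).hom) =
        ((C₁ ⊗ C₂) ◁ (c₁ ▷ C₂)) ≫ ((C₁ ⊗ C₂) ◁ (𝟙_ C ◁ c₂)) ≫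
          ((C₁ ⊗ C₂) ◁ (λ_ (𝟙_ C)).hom) := by
      rw [← MonoidalCategory.whiskerLeft_comp, ← MonoidalCategory.whiskerLeft_comp,
        MonoidalCategory.tensorHom_def, Category.assoc]
    rw [hx]; infer_instance
  · exact ⟨(C₁ ◁ c₂) ≫ (ρ_ C₁).hom, by
      rw [tensorHom_def']
      simp [whisker_exchange, MonoidalCategory.unitors_equal]⟩
  · exact ⟨(c₁ ▷ C₂) ≫ (λ_ C₂).hom, by
      rw [MonoidalCategory.tensorHom_def]
      simp⟩
  · rintro D d hd ⟨f, hf⟩ ⟨g, hg⟩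
    have : IsIso (D ◁ d) := hd
    refine ⟨(ρ_ D).inv ≫ inv (D ◁ d) ≫ (f ⊗ₘ g), ?_⟩
    rw [Category.assoc, Category.assoc, MonoidalCategory.tensorHom_comp_tensorHom_assoc, hf, hg,
      tensorHom_def' d d]
    slice_lhs 2 3 => rw [IsIso.inv_hom_id]
    simp [whisker_exchange, MonoidalCategory.unitors_equal]
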